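/- If D and E are commuting symmetric positive definite d×d matrices with D - E positive definite (D > E), then U(τ) = cosh(Dτ) - D⁻¹ sinh(Dτ) E is invertible for all τ ≥ 0. -/

import Mathlib

open Matrix

/-- Matrix hyperbolic cosine, defined by its power series `∑ A^(2k)/(2k)!`. -/
noncomputable def mcosh {d : ℕ} (A : Matrix (Fin d) (Fin d) ℝ) : Matrix (Fin d) (Fin d) ℝ :=
  ∑' k : ℕ, (((2 * k).factorial : ℝ))⁻¹ • A ^ (2 * k)

/-- Matrix hyperbolic sine, defined by its power series `∑ A^(2k+1)/(2k+1)!`. -/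
noncomputable def msinh {d : ℕ} (A : Matrix (Fin d) (Fin d) ℝ) : Matrix (Fin d) (Fin d) ℝ :=
  ∑' k : ℕ, (((2 * k + 1).factorial : ℝ))⁻¹ • A ^ (2 * k + 1)

section Aux

open NormedSpace

variable {d : ℕ}

private lemma summable_even' (A : Matrix (Fin d) (Fin d) ℝ) :
    Summable fun k : ℕ => (((2 * k).factorial : ℝ))⁻¹ • A ^ (2 * k) := by
  letI : SeminormedRing (Matrix (Fin d) (Fin d) ℝ) := Matrix.linftyOpSemiNormedRing
  letI : NormedRing (Matrix (Fin d) (Fin d) ℝ) := Matrix.linftyOpNormedRing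
  letI : NormedAlgebra ℝ (Matrix (Fin d) (Fin d) ℝ) := Matrix.linftyOpNormedAlgebra
  exact (expSeries_summable' (𝕂 := ℝ) A).comp_injective (fun a b h => by omega)

private lemma summable_odd' (A : Matrix (Fin d) (Fin d) ℝ) :
    Summable fun k : ℕ => (((2 * k + 1).factorial : ℝ))⁻¹ • A ^ (2 * k + 1) := by
  letI : SeminormedRing (Matrix (Fin d) (Fin d) ℝ) := Matrix.linftyOpSemiNormedRing
  letI : NormedRing (Matrix (Fin d) (Fin d) ℝ) := Matrix.linftyOpNormedRing
  letI : NormedAlgebra ℝ (Matrix (Fin d) (Fin d) ℝ) := Matrix.linftyOpNormedAlgebra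
  exact (expSeries_summable' (𝕂 := ℝ) A).comp_injective (fun a b h => by omega)

private lemma exp_neg_eq_mcosh_sub_msinh (A : Matrix (Fin d) (Fin d) ℝ) :
    exp (-A) = mcosh A - msinh A := by
  have he : HasSum (fun k : ℕ => (((2 * k).factorial : ℝ))⁻¹ • (-A) ^ (2 * k)) (mcosh A) := by
    have h2 : ∀ k : ℕ, (-A) ^ (2 * k) = A ^ (2 * k) := fun k => Even.neg_pow (even_two_mul k) A
    simp only [h2]
    exact (summable_even' A).hasSum
  have ho : HasSum (fun k : ℕ => (((2 * k + 1).factorial : ℝ))⁻¹ • (-A) ^ (2 * k + 1))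
      (-(msinh A)) := by
    have h2 : ∀ k : ℕ, (-A) ^ (2 * k + 1) = -(A ^ (2 * k + 1)) :=
      fun k => Odd.neg_pow (odd_two_mul_add_one k) A
    simp only [h2, smul_neg]
    exact (summable_odd' A).hasSum.neg
  have h := HasSum.even_add_odd (f := fun n : ℕ => ((n.factorial : ℝ))⁻¹ • (-A) ^ n) he ho
  rw [exp_eq_tsum (𝕂 := ℝ)]
  exact h.tsum_eq.trans (sub_eq_add_neg _ _).symm

private lemma posSemidef_smul' {M : Matrix (Fin d) (Fin d) ℝ} (hM : M.PosSemidef) {c : ℝ}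
    (hc : 0 ≤ c) : (c • M).PosSemidef := by
  refine posSemidef_iff_dotProduct_mulVec.mpr ⟨?_, fun x => ?_⟩
  · show (c • M)ᴴ = c • M
    rw [conjTranspose_smul, hM.1]
    norm_num
  · rw [smul_mulVec, dotProduct_smul]
    exact smul_nonneg hc (hM.dotProduct_mulVec_nonneg x)

private lemma posSemidef_tsum' {f : ℕ → Matrix (Fin d) (Fin d) ℝ} (hsum : Summable f)
    (h : ∀ k, (f k).PosSemidef) : (∑' k, f k).PosSemidef := by
  rw [posSemidef_iff_dotProduct_mulVec]
  constructor
  · show (∑' k, f k)ᴴ = ∑' k, f k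
    rw [Matrix.conjTranspose_tsum]
    exact tsum_congr fun k => (h k).1
  · intro x
    have hcont : Continuous fun M : Matrix (Fin d) (Fin d) ℝ => star x ⬝ᵥ M *ᵥ x :=
      Continuous.dotProduct continuous_const
        (Continuous.matrix_mulVec continuous_id continuous_const)
    let φ : Matrix (Fin d) (Fin d) ℝ →+ ℝ :=
      { toFun := fun M => star x ⬝ᵥ M *ᵥ x
        map_zero' := by simp
        map_add' := fun M N => by simp [Matrix.add_mulVec, dotProduct_add] }
    have h0 : 0 ≤ ∑' k, (⇑φ ∘ f) k := tsum_nonneg fun k => (h k).dotProduct_mulVec_nonneg x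
    rw [(hsum.hasSum.map φ hcont).tsum_eq] at h0
    exact h0

private lemma posDef_conjTranspose_mul_self' (B : Matrix (Fin d) (Fin d) ℝ) (hB : IsUnit B) :
    (Bᴴ * B).PosDef := by
  refine posDef_iff_dotProduct_mulVec.mpr ⟨(Matrix.posSemidef_conjTranspose_mul_self B).1, fun x hx => ?_⟩
  have hy : B *ᵥ x ≠ 0 :=
    (Matrix.mulVec_injective_iff_isUnit.mpr hB |>.ne_iff' (Matrix.mulVec_zero B)).2 hx
  rw [← Matrix.mulVec_mulVec, Matrix.dotProduct_mulVec, ← Matrix.star_mulVec]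
  exact dotProduct_star_self_pos_iff.mpr hy

end Aux

/-- If `D` and `E` are commuting symmetric positive definite matrices with `D - E`
positive definite, then `U(τ) = cosh(Dτ) - D⁻¹ sinh(Dτ) E` is invertible for all `τ ≥ 0`. -/
theorem U_invertible_of_D_gt_E {d : ℕ} (D E : Matrix (Fin d) (Fin d) ℝ)
    (hD : D.PosDef) (hE : E.PosDef) (hcomm : D * E = E * D) (hDE : (D - E).PosDef)
    (τ : ℝ) (hτ : 0 ≤ τ) :
    IsUnit (mcosh (τ • D) - D⁻¹ * msinh (τ • D) * E) := by
  set A := τ • D with hA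
  have hdet : IsUnit D.det := (Matrix.isUnit_iff_isUnit_det D).mp hD.isUnit
  have hDA : Commute D A := (Commute.refl D).smul_right τ
  have hDS : Commute D (msinh A) :=
    Commute.tsum_right _ fun k => (hDA.pow_right _).smul_right _
  have key1 : D⁻¹ * msinh A * D = msinh A := by
    rw [Matrix.mul_assoc, ← hDS.eq, Matrix.nonsing_inv_mul_cancel_left _ _ hdet]
  have hexp : NormedSpace.exp (-A) = mcosh A - msinh A := exp_neg_eq_mcosh_sub_msinh A
  -- the exponential part is positive definite
  have hexpPD : (NormedSpace.exp (-A)).PosDef := by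
    have hB : IsUnit (NormedSpace.exp ((-(τ / 2)) • D)) := Matrix.isUnit_exp _
    have hsplit : -A = (-(τ / 2)) • D + (-(τ / 2)) • D := by
      rw [hA, ← add_smul, ← neg_smul]
      congr 1
      ring
    have hBB : NormedSpace.exp (-A) =
        NormedSpace.exp ((-(τ / 2)) • D) * NormedSpace.exp ((-(τ / 2)) • D) := by
      rw [hsplit, Matrix.exp_add_of_commute _ _ (Commute.refl _)]
    have hsym : (NormedSpace.exp ((-(τ / 2)) • D))ᴴ = NormedSpace.exp ((-(τ / 2)) • D) := by
      show (NormedSpace.exp ((-(τ / 2)) • D))ᵀ = NormedSpace.exp ((-(τ / 2)) • D)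
      rw [← Matrix.exp_transpose]
      congr 1
      rw [Matrix.transpose_smul]
      congr 1
      exact hD.1
    have hpd := posDef_conjTranspose_mul_self' (NormedSpace.exp ((-(τ / 2)) • D)) hB
    rw [hsym] at hpd
    rwa [hBB]
  -- the remainder is positive semidefinite
  have hcDE : Commute (D - E) D := (Commute.refl D).sub_left hcomm.symm
  have hterm : ∀ k : ℕ,
      (D⁻¹ * ((((2 * k + 1).factorial : ℝ))⁻¹ • A ^ (2 * k + 1)) * (D - E)).PosSemidef := by
    intro k
    have e1 : A ^ (2 * k + 1) = τ ^ (2 * k + 1) • D ^ (2 * k + 1) := smul_pow τ D _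
    have hm : D⁻¹ * D ^ (2 * k + 1) * (D - E) = D ^ k * (D - E) * D ^ k := by
      have h1 : D⁻¹ * D ^ (2 * k + 1) = D ^ (2 * k) := by
        rw [pow_succ', Matrix.nonsing_inv_mul_cancel_left _ _ hdet]
      rw [h1, two_mul, pow_add, Matrix.mul_assoc, Matrix.mul_assoc, (hcDE.pow_right k).eq]
    have key : D⁻¹ * ((((2 * k + 1).factorial : ℝ))⁻¹ • A ^ (2 * k + 1)) * (D - E)
        = ((((2 * k + 1).factorial : ℝ))⁻¹ * τ ^ (2 * k + 1)) • (D ^ k * (D - E) * D ^ k) := by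
      rw [e1, smul_smul, Matrix.mul_smul, Matrix.smul_mul, hm]
    rw [key]
    have hk : (D ^ k)ᴴ = D ^ k := by rw [conjTranspose_pow, hD.1]
    have hps := hDE.posSemidef.mul_mul_conjTranspose_same (D ^ k)
    rw [hk] at hps
    exact posSemidef_smul' hps
      (mul_nonneg (by positivity) (pow_nonneg hτ _))
  have hs := summable_odd' A
  have hpsd : (D⁻¹ * msinh A * (D - E)).PosSemidef := by
    have heq : D⁻¹ * msinh A * (D - E)
        = ∑' k : ℕ, D⁻¹ * ((((2 * k + 1).factorial : ℝ))⁻¹ • A ^ (2 * k + 1)) * (D - E) := by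
      show D⁻¹ * (∑' k : ℕ, (((2 * k + 1).factorial : ℝ))⁻¹ • A ^ (2 * k + 1)) * (D - E) = _
      rw [← hs.tsum_mul_left D⁻¹, ← (hs.mul_left D⁻¹).tsum_mul_right (D - E)]
    rw [heq]
    exact posSemidef_tsum' ((hs.mul_left D⁻¹).mul_right (D - E)) hterm
  have hfinal : mcosh A - D⁻¹ * msinh A * E
      = NormedSpace.exp (-A) + D⁻¹ * msinh A * (D - E) := by
    rw [hexp, Matrix.mul_sub, key1]
    abel
  rw [hfinal]
  exact (hexpPD.add_posSemidef hpsd).isUnit
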